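/- Let G be a bi-orderable group, let t, x ∈ G, and let s ≥ 1 and m ≥ 2. Set z_j = t^j x t^{−j} for 0 ≤ j ≤ s+1, and let D be a nonempty finite product of elements taken (with repetition allowed) from {z₀, z₁, ..., z_{s−1}}. If z_s (D z_{s+1}) z_s⁻¹ = (D z_{s+1})ᵐ, then x = 1. -/

import Mathlib

/-- A group is bi-orderable if there is a linear (strict total) order on it which is
invariant under both left and right multiplication. -/
def IsBiOrderable (G : Type*) [Group G] : Prop :=
  ∃ lt : G → G → Prop, IsStrictTotalOrder G lt ∧
    (∀ f g h : G, lt g h → lt (f * g) (f * h)) ∧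
    (∀ f g h : G, lt g h → lt (g * f) (h * f))

private lemma natAux (n m : ℕ) (hm : 2 ≤ m) : ∃ k, 1 ≤ k ∧ n * k + 1 ≤ m ^ k := by
  refine ⟨2 * n + 2, by omega, ?_⟩
  have h1 : n + 1 ≤ 2 ^ n := (Nat.lt_two_pow_self (n := n))
  have h2 : (2:ℕ) ^ (2 * n + 2) ≤ m ^ (2 * n + 2) := Nat.pow_le_pow_left hm _
  have h3 : (2:ℕ) ^ (2 * n + 2) = 2 ^ n * 2 ^ n * 4 := by ring
  nlinarith [Nat.mul_le_mul h1 h1]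

private theorem biMain {G : Type*} [Group G] (lt : G → G → Prop)
    (hir : ∀ a : G, ¬ lt a a)
    (htr : ∀ a b c : G, lt a b → lt b c → lt a c)
    (htc : ∀ a b : G, a ≠ b → lt a b ∨ lt b a)
    (hl : ∀ f g h : G, lt g h → lt (f * g) (f * h))
    (hr : ∀ f g h : G, lt g h → lt (g * f) (h * f))
    (t x : G) (s m : ℕ) (hs : 1 ≤ s) (hm : 2 ≤ m)
    (z : ℕ → G) (hz : ∀ j, z j = t ^ j * x * (t ^ j)⁻¹)
    (w : List (Fin s)) (hw : w ≠ []) (D : G) (hD : D = (w.map fun j => z (j : ℕ)).prod)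
    (h : z s * (D * z (s + 1)) * (z s)⁻¹ = (D * z (s + 1)) ^ m)
    (hx : lt 1 x) : False := by
  -- basic consequences of bi-invariance
  have hconj : ∀ g a b : G, lt a b → lt (g * a * g⁻¹) (g * b * g⁻¹) := fun g a b hab =>
    hr _ _ _ (hl g _ _ hab)
  have hpos_mul : ∀ a b : G, lt 1 a → lt 1 b → lt 1 (a * b) := by
    intro a b ha hb
    have h1 : lt b (a * b) := by simpa using hr b 1 a ha
    exact htr _ _ _ hb h1
  have hinv : ∀ a : G, lt 1 a → lt a⁻¹ 1 := by
    intro a ha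
    simpa using hr a⁻¹ 1 a ha
  have hpow_pos : ∀ a : G, lt 1 a → ∀ n : ℕ, 1 ≤ n → lt 1 (a ^ n) := by
    intro a ha n hn
    induction n with
    | zero => omega
    | succ k ih =>
      rcases Nat.eq_zero_or_pos k with hk | hk
      · subst hk; simpa using ha
      · rw [pow_succ]; exact hpos_mul _ _ (ih hk) ha
  have hpow_lt : ∀ a : G, lt 1 a → ∀ p q : ℕ, p < q → lt (a ^ p) (a ^ q) := by
    intro a ha p q hpq
    have h1 : lt 1 (a ^ (q - p)) := hpow_pos a ha _ (by omega)
    have h2 : lt (a ^ p * 1) (a ^ p * a ^ (q - p)) := hl _ _ _ h1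
    rw [mul_one, ← pow_add] at h2
    have h3 : p + (q - p) = q := by omega
    rwa [h3] at h2
  have hpow_base : ∀ a b : G, lt 1 a → lt a b → ∀ n : ℕ, 1 ≤ n → lt (a ^ n) (b ^ n) := by
    intro a b ha hab n hn
    induction n with
    | zero => omega
    | succ k ih =>
      rcases Nat.eq_zero_or_pos k with hk | hk
      · subst hk; simpa using hab
      · have h1 : lt (a ^ k * a) (b ^ k * a) := hr _ _ _ (ih hk)
        have h2 : lt (b ^ k * a) (b ^ k * b) := hl _ _ _ hab
        rw [pow_succ, pow_succ]
        exact htr _ _ _ h1 h2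
  have hconjpow : ∀ (g a : G) (n : ℕ), (g * a * g⁻¹) ^ n = g * a ^ n * g⁻¹ := by
    intro g a n
    induction n with
    | zero => simp
    | succ k ih => rw [pow_succ, ih, pow_succ]; simp [mul_assoc]
  -- positivity of the z's
  have hzpos : ∀ j, lt 1 (z j) := by
    intro j
    have h1 := hconj (t ^ j) 1 x hx
    rw [hz j]
    simpa using h1
  have hlist : ∀ L : List G, (∀ g ∈ L, lt 1 g) → lt 1 L.prod ∨ L.prod = 1 := by
    intro L hL
    induction L with
    | nil => right; simp
    | cons g L ih =>
      left
      rw [List.prod_cons]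
      have hg : lt 1 g := hL g (by simp)
      rcases ih (fun y hy => hL y (by simp [hy])) with h1 | h1
      · exact hpos_mul _ _ hg h1
      · rw [h1, mul_one]; exact hg
  obtain ⟨j0, tl, rfl⟩ : ∃ j0 tl, w = j0 :: tl := by
    cases w with
    | nil => exact absurd rfl hw
    | cons a l => exact ⟨a, l, rfl⟩
  set W := D * z (s + 1) with hWdef
  have hTle : lt 1 (tl.map fun j => z (j : ℕ)).prod ∨ (tl.map fun j => z (j : ℕ)).prod = 1 := by
    refine hlist _ ?_
    intro g hg
    simp only [List.mem_map] at hg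
    obtain ⟨j, _, rfl⟩ := hg
    exact hzpos _
  have hD' : D = z (j0 : ℕ) * (tl.map fun j => z (j : ℕ)).prod := by rw [hD]; simp
  have hDpos : lt 1 D := by
    rw [hD']
    rcases hTle with h1 | h1
    · exact hpos_mul _ _ (hzpos _) h1
    · rw [h1, mul_one]; exact hzpos _
  have hWpos : lt 1 W := hpos_mul _ _ hDpos (hzpos _)
  have hzsW : lt (z (s + 1)) W := by
    simpa using hr (z (s + 1)) 1 D hDpos
  have hj0W : lt (z (j0 : ℕ)) W := by
    have hpos2 : lt 1 ((tl.map fun j => z (j : ℕ)).prod * z (s + 1)) := by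
      rcases hTle with h1 | h1
      · exact hpos_mul _ _ h1 (hzpos _)
      · rw [h1, one_mul]; exact hzpos _
    have h2 := hl (z (j0 : ℕ)) _ _ hpos2
    rw [mul_one] at h2
    have heq : W = z (j0 : ℕ) * ((tl.map fun j => z (j : ℕ)).prod * z (s + 1)) := by
      rw [hWdef, hD', mul_assoc]
    rw [heq]; exact h2
  -- iterated relation
  have hiter : ∀ k : ℕ, (z s) ^ k * W * ((z s) ^ k)⁻¹ = W ^ (m ^ k) := by
    intro k
    induction k with
    | zero => simp
    | succ k ih =>
      have e1 : (z s) ^ (k + 1) * W * ((z s) ^ (k + 1))⁻¹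
          = z s * ((z s) ^ k * W * ((z s) ^ k)⁻¹) * (z s)⁻¹ := by
        rw [pow_succ']
        simp [mul_assoc, mul_inv_rev]
      rw [e1, ih, ← hconjpow, h, ← pow_mul]
      congr 1
      rw [pow_succ']
  -- key lemma: W^n < z s for all n ≥ 1
  have hkey : ∀ n : ℕ, 1 ≤ n → lt (W ^ n) (z s) := by
    intro n hn
    by_contra hcon
    have hle : lt (z s) (W ^ n) ∨ z s = W ^ n := by
      by_cases he : z s = W ^ n
      · exact Or.inr he
      · rcases htc _ _ he with h1 | h1
        · exact Or.inl h1
        · exact absurd h1 hcon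
    obtain ⟨k, hk1, hk2⟩ := natAux n m hm
    have hlek : lt ((z s) ^ k) (W ^ (n * k)) ∨ (z s) ^ k = W ^ (n * k) := by
      rcases hle with h1 | h1
      · left
        have h2 := hpow_base _ _ (hzpos s) h1 k hk1
        rwa [← pow_mul] at h2
      · right; rw [h1, ← pow_mul]
    have h1 : lt (W ^ (m ^ k)) ((z s) ^ k * W) := by
      have hzk : lt 1 ((z s) ^ k) := hpow_pos _ (hzpos s) k hk1
      have hneg : lt ((z s) ^ k)⁻¹ 1 := hinv _ hzk
      have h3 := hl ((z s) ^ k * W) _ _ hneg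
      rw [mul_one] at h3
      rw [hiter k] at h3
      exact h3
    have h2 : lt ((z s) ^ k * W) (W ^ (n * k + 1)) ∨ (z s) ^ k * W = W ^ (n * k + 1) := by
      rcases hlek with h3 | h3
      · left
        have h4 := hr W _ _ h3
        rwa [← pow_succ] at h4
      · right; rw [h3, ← pow_succ]
    have h4 : lt (W ^ (m ^ k)) (W ^ (n * k + 1)) := by
      rcases h2 with h3 | h3
      · exact htr _ _ _ h1 h3
      · rwa [h3] at h1
    rcases Nat.eq_or_lt_of_le hk2 with he | hlt2
    · rw [he] at h4; exact hir _ h4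
    · exact hir _ (htr _ _ _ h4 (hpow_lt _ hWpos _ _ hlt2))
  -- shifting conjugation
  have hshift : ∀ d i : ℕ, d ≤ i → (t ^ d)⁻¹ * z i * t ^ d = z (i - d) := by
    intro d i hdi
    obtain ⟨j, rfl⟩ : ∃ j, i = d + j := ⟨i - d, by omega⟩
    rw [hz, hz]
    have e2 : d + j - d = j := by omega
    rw [e2, pow_add]
    simp [mul_assoc, mul_inv_rev]
  have hC : ∀ i : ℕ, i ≤ s → ∀ n : ℕ, 1 ≤ n → lt ((z (i + 1)) ^ n) (z i) := by
    intro i hi n hn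
    have hP : lt ((z (s + 1)) ^ n) (z s) := by
      have hzw : lt ((z (s + 1)) ^ n) (W ^ n) := hpow_base _ _ (hzpos _) hzsW n hn
      exact htr _ _ _ hzw (hkey n hn)
    set d := s - i with hd2
    have hconj2 := hconj ((t ^ d)⁻¹) _ _ hP
    rw [inv_inv] at hconj2
    have hs1 : (t ^ d)⁻¹ * z (s + 1) * t ^ d = z (i + 1) := by
      have h5 := hshift d (s + 1) (by omega)
      have e2 : s + 1 - d = i + 1 := by omega
      rwa [e2] at h5
    have e1 : (t ^ d)⁻¹ * (z (s + 1)) ^ n * t ^ d = (z (i + 1)) ^ n := by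
      have h5 := hconjpow ((t ^ d)⁻¹) (z (s + 1)) n
      rw [inv_inv] at h5
      rw [← h5, hs1]
    have e3 : (t ^ d)⁻¹ * z s * t ^ d = z i := by
      have h5 := hshift d s (by omega)
      have e4 : s - d = i := by omega
      rwa [e4] at h5
    rw [e1, e3] at hconj2
    exact hconj2
  have hdec : ∀ d : ℕ, ∀ j : ℕ, 1 ≤ d → j + d ≤ s → lt (z (j + d)) (z j) := by
    intro d
    induction d with
    | zero => intro j h1 _; omega
    | succ k ih =>
      intro j _ hj
      rcases Nat.eq_zero_or_pos k with hk | hk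
      · subst hk
        have h5 := hC j (by omega) 1 le_rfl
        rwa [pow_one] at h5
      · have h1 : lt (z (j + k + 1)) (z (j + k)) := by
          have h5 := hC (j + k) (by omega) 1 le_rfl
          rwa [pow_one] at h5
        have h2 : lt (z (j + k)) (z j) := ih j hk (by omega)
        have he : j + (k + 1) = j + k + 1 := by omega
        rw [he]
        exact htr _ _ _ h1 h2
  have hj0s : (j0 : ℕ) < s := j0.isLt
  have hchain : lt (z s) (z (j0 : ℕ)) := by
    have h5 := hdec (s - (j0 : ℕ)) (j0 : ℕ) (by omega) (by omega)
    have he : (j0 : ℕ) + (s - (j0 : ℕ)) = s := by omega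
    rwa [he] at h5
  have hfin : lt (z (j0 : ℕ)) (z s) := by
    have h5 : lt W (z s) := by
      have h6 := hkey 1 le_rfl
      rwa [pow_one] at h6
    exact htr _ _ _ hj0W h5
  exact hir _ (htr _ _ _ hchain hfin)
/-- Let `G` be a bi-orderable group, `t, x ∈ G`, `s ≥ 1`, `m ≥ 2`.
Set `z j = t^j x t^{-j}`, and let `D` be a nonempty finite product of elements from
`{z 0, …, z (s-1)}` (encoded by a nonempty list `w` over `Fin s`).
If `z s (D z_{s+1}) (z s)⁻¹ = (D z_{s+1})^m` then `x = 1`. -/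
theorem eq_one_of_biorderable_general {G : Type*} [Group G] (hG : IsBiOrderable G)
    (t x : G) (s m : ℕ) (hs : 1 ≤ s) (hm : 2 ≤ m)
    (z : ℕ → G) (hz : ∀ j, z j = t ^ j * x * (t ^ j)⁻¹)
    (w : List (Fin s)) (hw : w ≠ []) (D : G) (hD : D = (w.map fun j => z (j : ℕ)).prod)
    (h : z s * (D * z (s + 1)) * (z s)⁻¹ = (D * z (s + 1)) ^ m) : x = 1 := by
  by_contra hx
  obtain ⟨lt, hto, hl, hr⟩ := hG
  have hir : ∀ a : G, ¬ lt a a := fun a => hto.irrefl a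
  have htr : ∀ a b c : G, lt a b → lt b c → lt a c := fun a b c => hto.trans a b c
  have htc : ∀ a b : G, a ≠ b → lt a b ∨ lt b a := by
    intro a b hne
    rcases (or_iff_not_imp_left.2 fun h1 => or_iff_not_imp_right.2 fun h2 => hto.trichotomous a b h1 h2) with h1 | h1 | h1
    · exact Or.inl h1
    · exact absurd h1 hne
    · exact Or.inr h1
  rcases (or_iff_not_imp_left.2 fun h1 => or_iff_not_imp_right.2 fun h2 => hto.trichotomous x 1 h1 h2) with h1 | h1 | h1
  · exact biMain (fun a b => lt b a) hir (fun a b c hab hbc => htr _ _ _ hbc hab)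
      (fun a b hne => (htc b a (Ne.symm hne)))
      (fun f g h' hgh => hl f h' g hgh) (fun f g h' hgh => hr f h' g hgh)
      t x s m hs hm z hz w hw D hD h h1
  · exact hx h1
  · exact biMain lt hir htr htc hl hr t x s m hs hm z hz w hw D hD h h1
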